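/- Let θ be the Lane–Emden function of index ν (1 < ν < 5), positive on [0, ξ₁) with θ(0)=1, θ'(0)=0, and let r₁ ∈ (0, ξ₁) be a critical point of g(r) = r²θ(r)^{ν−1}, so that ∫₀^{r₁} θ^ν r² dr = (2/(ν−1)) θ(r₁) r₁. Then the identity ∫₀^{r₁} θ(r)^ν r² dr = (r₁³/3) θ(r₁)^ν + (ν/6)(2/(ν−1))² θ(r₁) r₁ + (ν/6) Q holds, where Q = ∫₀^{r₁} [(r θ'(r) + θ(r)) / (θ(r)² r²)] (∫₀^r θ(s)^ν s² ds)² dr. -/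

import Mathlib

open Set MeasureTheory intervalIntegral Filter Topology

lemma aux_const6 (G : ℝ → ℝ) (b : ℝ) (hb : 0 < b)
    (hc : ContinuousOn G (Set.Icc 0 b))
    (hd : ∀ x ∈ Set.Ioo 0 b, HasDerivAt G 0 x) : G b = G 0 := by
  have key : ∀ a ∈ Set.Ioo 0 b, G b = G a := by
    intro a ha
    have h := constant_of_has_deriv_right_zero (f := G) (a := a) (b := b)
      (hc.mono (Set.Icc_subset_Icc ha.1.le le_rfl))
      (fun x hx => (hd x ⟨lt_of_lt_of_le ha.1 hx.1, hx.2⟩).hasDerivWithinAt)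
    exact (h b (Set.right_mem_Icc.2 ha.2.le)).symm ▸ rfl
  have hne : (𝓝[Set.Ioo 0 b] (0:ℝ)).NeBot := by
    rw [← mem_closure_iff_nhdsWithin_neBot, closure_Ioo hb.ne]
    exact Set.left_mem_Icc.2 hb.le
  have h1 : Filter.Tendsto G (𝓝[Set.Ioo 0 b] 0) (𝓝 (G 0)) :=
    (hc 0 (Set.left_mem_Icc.2 hb.le)).mono_left
      (nhdsWithin_mono _ Set.Ioo_subset_Icc_self)
  have h2 : Filter.Tendsto G (𝓝[Set.Ioo 0 b] 0) (𝓝 (G b)) := by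
    refine Filter.Tendsto.congr' ?_ tendsto_const_nhds
    filter_upwards [self_mem_nhdsWithin] with a ha using (key a ha)
  exact tendsto_nhds_unique h2 h1

theorem stmt_6 (ν ξ₁ : ℝ) (hν : 1 < ν) (hν5 : ν < 5) (hξ : 0 < ξ₁)
    (θ : ℝ → ℝ) (hC2 : ContDiffOn ℝ 2 θ (Set.Icc 0 ξ₁))
    (hode : ∀ r ∈ Set.Ioo 0 ξ₁,
      deriv (deriv θ) r + (2 / r) * deriv θ r + θ r ^ ν = 0)
    (h0 : θ 0 = 1) (h0' : deriv θ 0 = 0)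
    (hpos : ∀ r ∈ Set.Ico 0 ξ₁, 0 < θ r)
    (r₁ : ℝ) (hr₁ : r₁ ∈ Set.Ioo 0 ξ₁)
    (hcrit : (ν - 1) * r₁ * deriv θ r₁ + 2 * θ r₁ = 0)
    (hint : (∫ r in (0:ℝ)..r₁, θ r ^ ν * r ^ 2) = (2 / (ν - 1)) * θ r₁ * r₁) :
    (∫ r in (0:ℝ)..r₁, θ r ^ ν * r ^ 2) =
      (r₁ ^ 3 / 3) * θ r₁ ^ ν + (ν / 6) * (2 / (ν - 1)) ^ 2 * θ r₁ * r₁ +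
      (ν / 6) * ∫ r in (0:ℝ)..r₁,
        ((r * deriv θ r + θ r) / (θ r ^ 2 * r ^ 2)) *
          (∫ s in (0:ℝ)..r, θ s ^ ν * s ^ 2) ^ 2 := by
  obtain ⟨hb, hbξ⟩ := hr₁
  have hν0 : (0:ℝ) ≤ ν := by linarith
  have hUD : UniqueDiffOn ℝ (Set.Icc (0:ℝ) ξ₁) := uniqueDiffOn_Icc hξ
  set S := Set.Icc (0:ℝ) ξ₁ with hSdef
  set ψ := derivWithin θ S with hψdef
  have hθC : ContinuousOn θ S := hC2.continuousOn
  have hψC : ContinuousOn ψ S := hC2.continuousOn_derivWithin hUD (by norm_num)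
  have hψD1 : ContDiffOn ℝ 1 ψ S := hC2.derivWithin hUD (by norm_num)
  have hmem : ∀ x ∈ Set.Ioo 0 ξ₁, S ∈ 𝓝 x := fun x hx => Icc_mem_nhds hx.1 hx.2
  have hψeq : ∀ x ∈ Set.Ioo 0 ξ₁, ψ x = deriv θ x := fun x hx =>
    derivWithin_of_mem_nhds (hmem x hx)
  have hθdiff : ∀ x ∈ Set.Ioo 0 ξ₁, HasDerivAt θ (ψ x) x := by
    intro x hx
    have h := ((hC2.contDiffAt (hmem x hx)).differentiableAt (by norm_num)).hasDerivAt
    rwa [← hψeq x hx] at h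
  have hψdiff : ∀ x ∈ Set.Ioo 0 ξ₁, HasDerivAt ψ (deriv (deriv θ) x) x := by
    intro x hx
    have hd : HasDerivAt ψ (deriv ψ x) x :=
      ((hψD1.contDiffAt (hmem x hx)).differentiableAt one_ne_zero).hasDerivAt
    have he : ψ =ᶠ[𝓝 x] deriv θ := by
      filter_upwards [isOpen_Ioo.mem_nhds hx] with y hy using hψeq y hy
    rwa [he.deriv_eq] at hd
  -- the integrand f and the mass function M
  set f := fun r : ℝ => θ r ^ ν * r ^ 2 with hfdef
  have hfC : ContinuousOn f S :=
    (hθC.rpow_const (fun x _ => Or.inr hν0)).mul ((continuous_pow 2).continuousOn)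
  set M := fun r : ℝ => ∫ s in (0:ℝ)..r, f s with hMdef
  have hsub : ∀ r ∈ S, Set.uIcc (0:ℝ) r ⊆ S := by
    intro r hr
    rw [Set.uIcc_of_le hr.1]
    exact Set.Icc_subset_Icc le_rfl hr.2
  have hfInt : ∀ r ∈ S, IntervalIntegrable f volume 0 r := fun r hr =>
    (hfC.mono (hsub r hr)).intervalIntegrable
  have hM0 : M 0 = 0 := intervalIntegral.integral_same
  have hMC : ContinuousOn M S := by
    have h := continuousOn_primitive_interval (f := f) (a := (0:ℝ)) (b := ξ₁)
      (μ := volume) (by rw [Set.uIcc_of_le hξ.le]; exact hfC.integrableOn_Icc)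
    rwa [Set.uIcc_of_le hξ.le] at h
  have hM' : ∀ x ∈ Set.Ioo 0 ξ₁, HasDerivAt M (f x) x := by
    intro x hx
    exact intervalIntegral.integral_hasDerivAt_right (hfInt x ⟨hx.1.le, hx.2.le⟩)
      ((hfC.mono Set.Ioo_subset_Icc_self).stronglyMeasurableAtFilter isOpen_Ioo x hx)
      (hfC.continuousAt (hmem x hx))
  -- key identity : M r = -(r^2 * ψ r) on [0, r₁]
  have hkey : ∀ r ∈ Set.Icc 0 r₁, M r = -(r ^ 2 * ψ r) := by
    intro r hr
    rcases eq_or_lt_of_le hr.1 with h0r | h0r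
    · rw [← h0r]; simp [hM0]
    · have hrS : Set.Icc (0:ℝ) r ⊆ S :=
        Set.Icc_subset_Icc le_rfl (le_trans hr.2 hbξ.le)
      have hF := aux_const6 (fun u => u ^ 2 * ψ u + M u) r h0r
        (((continuous_pow 2).continuousOn.mul (hψC.mono hrS)).add (hMC.mono hrS))
        (by
          intro x hx
          have hx' : x ∈ Set.Ioo 0 ξ₁ := ⟨hx.1, lt_of_lt_of_le hx.2 (le_trans hr.2 hbξ.le)⟩
          have hd := ((hasDerivAt_pow 2 x).mul (hψdiff x hx')).add (hM' x hx')
          refine hd.congr_deriv ?_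
          have hodex := hode x hx'
          have hxne : x ≠ 0 := ne_of_gt hx.1
          have : deriv (deriv θ) x = -((2 / x) * deriv θ x) - θ x ^ ν := by linarith
          rw [this, hψeq x hx', hfdef]
          field_simp
          ring)
      simp only [hM0, ne_eq, OfNat.ofNat_ne_zero, not_false_eq_true, zero_pow,
        zero_mul, add_zero, zero_add] at hF
      linarith [hF]
  have hr₁S : Set.Icc (0:ℝ) r₁ ⊆ S := Set.Icc_subset_Icc le_rfl hbξ.le
  -- M near 0 : M s / s → 0
  have hM0' : HasDerivWithinAt M 0 (Set.Ici 0) 0 := by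
    have hmeas : StronglyMeasurableAtFilter f (𝓝[Set.Ioi (0:ℝ)] 0) volume :=
      ⟨S, Icc_mem_nhdsGT_of_mem (Set.left_mem_Ico.2 hξ),
        hfC.aestronglyMeasurable measurableSet_Icc⟩
    have hcw : ContinuousWithinAt f (Set.Ioi 0) 0 :=
      (hfC 0 ⟨le_rfl, hξ.le⟩).mono_of_mem_nhdsWithin (Icc_mem_nhdsGT_of_mem (Set.left_mem_Ico.2 hξ))
    have h := intervalIntegral.integral_hasDerivWithinAt_right
      (s := Set.Ici (0:ℝ)) (t := Set.Ioi (0:ℝ))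
      (hfInt 0 ⟨le_rfl, hξ.le⟩) hmeas hcw
    simpa [hfdef] using h
  have hMslope : Filter.Tendsto (fun s => M s / s) (𝓝[>] (0:ℝ)) (𝓝 0) := by
    have h := hasDerivWithinAt_iff_tendsto_slope.1 hM0'
    have hset : Set.Ici (0:ℝ) \ {0} = Set.Ioi 0 := by
      ext y
      simp [Set.mem_diff, lt_iff_le_and_ne, eq_comm]
    rw [hset] at h
    refine Filter.Tendsto.congr (fun s => ?_) h
    simp [slope_def_field, hM0]
  have hMdivC : ContinuousOn (fun s : ℝ => M s / s) (Set.Icc 0 r₁) := by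
    intro s hs
    rcases eq_or_lt_of_le hs.1 with h0s | h0s
    · rw [← h0s]
      rw [← continuousWithinAt_diff_self]
      have hsub2 : Set.Icc (0:ℝ) r₁ \ {0} ⊆ Set.Ioi 0 := fun u hu =>
        lt_of_le_of_ne hu.1.1 (Ne.symm hu.2)
      have h := hMslope.mono_left (nhdsWithin_mono _ hsub2)
      simpa [ContinuousWithinAt, hM0] using h
    · exact ((hMC.mono hr₁S) s hs).div continuousWithinAt_id (ne_of_gt h0s)
  -- positivity of θ on [0, r₁]
  have hθpos : ∀ r ∈ Set.Icc (0:ℝ) r₁, 0 < θ r := fun r hr =>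
    hpos r ⟨hr.1, lt_of_le_of_lt hr.2 hbξ⟩
  -- the auxiliary integrand q
  set q := fun s : ℝ => ((s * ψ s + θ s) / (θ s ^ 2)) * (M s / s) ^ 2 with hqdef
  have hqC : ContinuousOn q (Set.Icc 0 r₁) := by
    have hg1 : ContinuousOn (fun s : ℝ => (s * ψ s + θ s) / θ s ^ 2) (Set.Icc 0 r₁) :=
      ((continuousOn_id.mul (hψC.mono hr₁S)).add (hθC.mono hr₁S)).div
        ((hθC.mono hr₁S).pow 2) (fun s hs => pow_ne_zero 2 (hθpos s hs).ne')
    exact hg1.mul (hMdivC.pow 2)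
  -- the function H
  set H := fun r : ℝ => M r - θ r ^ ν * r ^ 3 / 3 - (ν / 6) * ((M r / r) * (M r / θ r))
    - (ν / 6) * ∫ s in (0:ℝ)..r, q s with hHdef
  have hHC : ContinuousOn H (Set.Icc 0 r₁) := by
    have h1 : ContinuousOn (fun r : ℝ => θ r ^ ν * r ^ 3 / 3) (Set.Icc 0 r₁) :=
      (((hθC.mono hr₁S).rpow_const (fun x _ => Or.inr hν0)).mul
        ((continuous_pow 3).continuousOn)).div_const 3
    have h3 : ContinuousOn (fun r : ℝ => M r / θ r) (Set.Icc 0 r₁) :=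
      (hMC.mono hr₁S).div (hθC.mono hr₁S) (fun s hs => (hθpos s hs).ne')
    have h4 : ContinuousOn (fun r : ℝ => ∫ s in (0:ℝ)..r, q s) (Set.Icc 0 r₁) := by
      have h := continuousOn_primitive_interval (f := q) (a := (0:ℝ)) (b := r₁)
        (μ := volume) (by rw [Set.uIcc_of_le hb.le]; exact hqC.integrableOn_Icc)
      rwa [Set.uIcc_of_le hb.le] at h
    exact (((hMC.mono hr₁S).sub h1).sub
      (continuousOn_const.mul (hMdivC.mul h3))).sub (continuousOn_const.mul h4)
  have hH' : ∀ x ∈ Set.Ioo 0 r₁, HasDerivAt H 0 x := by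
    intro x hx
    have hx' : x ∈ Set.Ioo 0 ξ₁ := ⟨hx.1, lt_trans hx.2 hbξ⟩
    have hxmem : x ∈ Set.Icc (0:ℝ) r₁ := ⟨hx.1.le, hx.2.le⟩
    have hx0 : x ≠ 0 := ne_of_gt hx.1
    have ht : 0 < θ x := hθpos x hxmem
    have hθx : HasDerivAt θ (deriv θ x) x := by
      have h := hθdiff x hx'
      rwa [hψeq x hx'] at h
    have hMx : HasDerivAt M (f x) x := hM' x hx'
    have hq' : HasDerivAt (fun r => ∫ s in (0:ℝ)..r, q s) (q x) x := by
      have hsub3 : Set.uIcc (0:ℝ) x ⊆ Set.Icc 0 r₁ := by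
        rw [Set.uIcc_of_le hx.1.le]
        exact Set.Icc_subset_Icc le_rfl hx.2.le
      exact intervalIntegral.integral_hasDerivAt_right
        ((hqC.mono hsub3).intervalIntegrable)
        ((hqC.mono Set.Ioo_subset_Icc_self).stronglyMeasurableAtFilter isOpen_Ioo x hx)
        (hqC.continuousAt (Icc_mem_nhds hx.1 hx.2))
    have hrpow : HasDerivAt (fun r => θ r ^ ν) (deriv θ x * ν * θ x ^ (ν - 1)) x :=
      hθx.rpow_const (Or.inl ht.ne')
    have h2 : HasDerivAt (fun r : ℝ => θ r ^ ν * r ^ 3 / 3)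
        ((deriv θ x * ν * θ x ^ (ν - 1) * x ^ 3 + θ x ^ ν * (3 * x ^ 2)) / 3) x := by
      have h := (hrpow.mul (hasDerivAt_pow 3 x)).div_const 3
      refine h.congr_deriv ?_
      try push_cast
      try ring
    have h3 : HasDerivAt (fun r => (M r / r) * (M r / θ r))
        (((f x * x - M x * 1) / x ^ 2) * (M x / θ x)
          + (M x / x) * ((f x * θ x - M x * deriv θ x) / θ x ^ 2)) x :=
      (hMx.div (hasDerivAt_id x) hx0).mul (hMx.div hθx ht.ne')
    have hH2 := ((hMx.sub h2).sub (HasDerivAt.const_mul (ν / 6) h3)).sub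
      (HasDerivAt.const_mul (ν / 6) hq')
    have hmeq : M x = -(x ^ 2 * deriv θ x) := by
      have h := hkey x hxmem
      rwa [hψeq x hx'] at h
    refine hH2.congr_deriv ?_
    have hA : θ x ^ ν = θ x ^ (ν - 1) * θ x := by
      rw [← Real.rpow_add_one ht.ne' (ν - 1)]
      norm_num
    simp only [hqdef, hfdef, hψeq x hx']
    rw [hmeq, hA]
    field_simp
    ring
  -- conclude : H r₁ = H 0 = 0
  have hHr := aux_const6 H r₁ hb hHC hH'
  have hH0 : H 0 = 0 := by
    simp [hHdef, hM0]
  rw [hH0] at hHr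
  -- rewrite the Q integral
  have hQ : (∫ r in (0:ℝ)..r₁, ((r * deriv θ r + θ r) / (θ r ^ 2 * r ^ 2)) *
      (∫ s in (0:ℝ)..r, θ s ^ ν * s ^ 2) ^ 2) = ∫ s in (0:ℝ)..r₁, q s := by
    apply intervalIntegral.integral_congr
    intro s hs
    rw [Set.uIcc_of_le hb.le] at hs
    have hMs : (∫ u in (0:ℝ)..s, θ u ^ ν * u ^ 2) = M s := rfl
    rcases eq_or_lt_of_le hs.1 with h0s | h0s
    · rw [← h0s]
      simp [hqdef, hM0]
    · have hsx : s ∈ Set.Ioo 0 ξ₁ := ⟨h0s, lt_of_le_of_lt hs.2 hbξ⟩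
      have hds : deriv θ s = ψ s := (hψeq s hsx).symm
      have hts : θ s ≠ 0 := (hθpos s hs).ne'
      have hs0 : s ≠ 0 := ne_of_gt h0s
      simp only [hds, hMs, hqdef]
      field_simp
      try ring
  rw [hQ]
  have hMr₁ : (∫ r in (0:ℝ)..r₁, θ r ^ ν * r ^ 2) = M r₁ := rfl
  rw [hMr₁] at hint ⊢
  have hmid : (M r₁ / r₁) * (M r₁ / θ r₁) = (2 / (ν - 1)) ^ 2 * θ r₁ * r₁ := by
    rw [hint]
    have h1 : r₁ ≠ 0 := ne_of_gt hb
    have h2 : θ r₁ ≠ 0 := (hθpos r₁ ⟨hb.le, le_rfl⟩).ne'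
    have h3 : ν - 1 ≠ 0 := by intro h; linarith [hν]
    field_simp
  have hfin : M r₁ - θ r₁ ^ ν * r₁ ^ 3 / 3 - (ν / 6) * ((M r₁ / r₁) * (M r₁ / θ r₁))
      - (ν / 6) * ∫ s in (0:ℝ)..r₁, q s = 0 := hHr
  rw [hmid] at hfin
  linarith [hfin]
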